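/- Let r : ℤ → ℝ³ be a nondegenerate discrete centroaffine space curve with invariants κ_k, κ̄_k, τ_k. Then for every k ∈ ℤ the discrete Frenet–Serret (chain structure) equation holds: r(k+2) = κ_k · r(k−1) + (−κ_k − κ̄_k) · r(k) + (τ_k + κ̄_k + 1) · r(k+1). -/

import Mathlib

/-- Determinant of the 3×3 matrix with columns `u`, `v`, `w`. -/
noncomputable def det3 (u v w : Fin 3 → ℝ) : ℝ := (Matrix.of ![u, v, w]).det

/-- Edge tangent vector of a discrete space curve. -/
def tang3 (r : ℤ → Fin 3 → ℝ) (k : ℤ) : Fin 3 → ℝ := r (k + 1) - r k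

/-- Nondegeneracy of a discrete centroaffine space curve. -/
def Nondeg3 (r : ℤ → Fin 3 → ℝ) : Prop :=
  ∀ k : ℤ, det3 (r (k - 1)) (r k) (r (k + 1)) ≠ 0

/-- First centroaffine curvature. -/
noncomputable def kappa3 (r : ℤ → Fin 3 → ℝ) (k : ℤ) : ℝ :=
  det3 (r k) (r (k + 1)) (r (k + 2)) / det3 (r (k - 1)) (r k) (r (k + 1))

/-- Second centroaffine curvature. -/
noncomputable def kbar3 (r : ℤ → Fin 3 → ℝ) (k : ℤ) : ℝ :=
  det3 (r (k + 1)) (tang3 r (k - 1)) (tang3 r (k + 1)) /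
    det3 (r k) (tang3 r (k - 1)) (tang3 r k)

/-- Centroaffine torsion. -/
noncomputable def tau3 (r : ℤ → Fin 3 → ℝ) (k : ℤ) : ℝ :=
  det3 (tang3 r (k - 1)) (tang3 r k) (tang3 r (k + 1)) /
    det3 (r (k - 1)) (r k) (r (k + 1))

/-- Discrete Frenet–Serret (chain structure) equation of a discrete centroaffine space
curve. -/
theorem stmt_8 (r : ℤ → Fin 3 → ℝ) (hr : Nondeg3 r) :
    ∀ k : ℤ, r (k + 2) =
      kappa3 r k • r (k - 1) + (-kappa3 r k - kbar3 r k) • r k +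
        (tau3 r k + kbar3 r k + 1) • r (k + 1) := by
  intro k
  have hD : det3 (r (k - 1)) (r k) (r (k + 1)) ≠ 0 := hr k
  have e1 : k - 1 + 1 = k := by ring
  have e2 : k + 1 + 1 = k + 2 := by ring
  have ht1 : tang3 r (k - 1) = r k - r (k - 1) := by rw [tang3, e1]
  have ht2 : tang3 r k = r (k + 1) - r k := rfl
  have ht3 : tang3 r (k + 1) = r (k + 2) - r (k + 1) := by rw [tang3, e2]
  set u := r (k - 1) with hu
  set v := r k with hv
  set w := r (k + 1) with hw
  set z := r (k + 2) with hz
  set M : Matrix (Fin 3) (Fin 3) ℝ := Matrix.of ![u, v, w] with hM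
  have hdet : M.det ≠ 0 := hD
  set y : Fin 3 → ℝ := Matrix.vecMul z M⁻¹ with hy
  have hyM : Matrix.vecMul y M = z := by
    rw [hy, Matrix.vecMul_vecMul, Matrix.nonsing_inv_mul M (isUnit_iff_ne_zero.mpr hdet),
      Matrix.vecMul_one]
  have hcomp : ∀ j, z j = y 0 * u j + y 1 * v j + y 2 * w j := by
    intro j
    rw [← hyM]
    simp [Matrix.vecMul, dotProduct, Fin.sum_univ_three, hM]
  have hD' : det3 u v w ≠ 0 := hD
  rw [det3, Matrix.det_fin_three] at hD'
  simp only [Matrix.of_apply, Matrix.cons_val', Matrix.cons_val_zero, Matrix.cons_val_one,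
    Matrix.head_cons, Matrix.cons_val_two, Matrix.tail_cons, Matrix.empty_val',
    Matrix.cons_val_fin_one, Matrix.head_fin_const] at hD'
  have hD2 : det3 v (v - u) (w - v) = det3 u v w := by
    simp [det3, Matrix.det_fin_three, Pi.sub_apply]; ring
  have hD2' : det3 v (v - u) (w - v) ≠ 0 := by rw [hD2]; exact hD
  rw [det3, Matrix.det_fin_three] at hD2'
  simp only [Matrix.of_apply, Matrix.cons_val', Matrix.cons_val_zero, Matrix.cons_val_one,
    Matrix.head_cons, Matrix.cons_val_two, Matrix.tail_cons, Matrix.empty_val',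
    Matrix.cons_val_fin_one, Matrix.head_fin_const, Pi.sub_apply] at hD2'
  have hk : kappa3 r k = y 0 := by
    rw [kappa3, ← hu, ← hv, ← hw, ← hz]
    simp only [det3, Matrix.det_fin_three, Matrix.of_apply, Matrix.cons_val',
      Matrix.cons_val_zero, Matrix.cons_val_one, Matrix.head_cons, Matrix.cons_val_two,
      Matrix.tail_cons, Matrix.empty_val', Matrix.cons_val_fin_one, Matrix.head_fin_const]
    rw [hcomp 0, hcomp 1, hcomp 2]
    rw [div_eq_iff hD']
    ring
  have hkb : kbar3 r k = -y 0 - y 1 := by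
    rw [kbar3, ht1, ht2, ht3, ← hv, ← hw]
    simp only [det3, Matrix.det_fin_three, Matrix.of_apply, Matrix.cons_val',
      Matrix.cons_val_zero, Matrix.cons_val_one, Matrix.head_cons, Matrix.cons_val_two,
      Matrix.tail_cons, Matrix.empty_val', Matrix.cons_val_fin_one, Matrix.head_fin_const,
      Pi.sub_apply]
    rw [hcomp 0, hcomp 1, hcomp 2]
    rw [div_eq_iff hD2']
    ring
  have htau : tau3 r k = y 0 + y 1 + y 2 - 1 := by
    rw [tau3, ht1, ht2, ht3, ← hu, ← hv, ← hw]
    simp only [det3, Matrix.det_fin_three, Matrix.of_apply, Matrix.cons_val',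
      Matrix.cons_val_zero, Matrix.cons_val_one, Matrix.head_cons, Matrix.cons_val_two,
      Matrix.tail_cons, Matrix.empty_val', Matrix.cons_val_fin_one, Matrix.head_fin_const,
      Pi.sub_apply]
    rw [hcomp 0, hcomp 1, hcomp 2]
    rw [div_eq_iff hD']
    ring
  rw [hk, hkb, htau]
  funext j
  simp only [Pi.add_apply, Pi.smul_apply, smul_eq_mul]
  rw [hcomp j]
  ring
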